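/- Let $(\lambda_n)_{n\ge2}$ be positive reals with $\sum_{n\ge2}\lambda_n^{-1}<\infty$ and $A_n=\sum_{i=n+1}^\infty \lambda_i^{-1}$. If $\lambda_n/\lambda_{n+1}\to\alpha\in[0,1)$ as $n\to\infty$, then $A_{n+1}/A_n \to \alpha$ as $n \to \infty$. -/

import Mathlib

open Filter Topology

lemma tail_over_term_limit (a : ℕ → ℝ) (hpos : ∀ n, 0 < a n) (hsum : Summable a)
    (α : ℝ) (hα0 : 0 ≤ α) (hα1 : α < 1)
    (hratio : Tendsto (fun n => a (n + 1) / a n) atTop (𝓝 α)) :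
    Tendsto (fun n => (∑' i, a (n + i)) / a n) atTop (𝓝 (1 - α)⁻¹) := by
  rw [Metric.tendsto_atTop]
  intro ε hε
  have hc : ContinuousAt (fun x : ℝ => (1 - x)⁻¹) α :=
    (continuousAt_const.sub continuousAt_id).inv₀ (by show (1:ℝ) - α ≠ 0; intro h; linarith)
  rw [Metric.continuousAt_iff] at hc
  obtain ⟨δ, hδ, hδf⟩ := hc ε hε
  set δ' : ℝ := min (δ / 2) ((1 - α) / 2) with hδ'def
  have hδ'pos : 0 < δ' := lt_min (by linarith) (by linarith)
  have hδ'δ : δ' < δ := lt_of_le_of_lt (min_le_left _ _) (by linarith)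
  have hu1 : α + δ' < 1 := by
    have := min_le_right (δ / 2) ((1 - α) / 2)
    rw [← hδ'def] at this
    linarith
  rw [Metric.tendsto_atTop] at hratio
  obtain ⟨N, hN⟩ := hratio δ' hδ'pos
  refine ⟨N, fun n hn => ?_⟩
  set u : ℝ := α + δ' with hudef
  set l : ℝ := max (α - δ') 0 with hldef
  have hl0 : 0 ≤ l := le_max_right _ _
  have hlα : l ≤ α := max_le (by linarith) hα0
  have hl1 : l < 1 := lt_of_le_of_lt hlα hα1
  have hu0 : 0 ≤ u := by positivity
  have hlu : |l - α| ≤ δ' := by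
    rw [abs_le]
    constructor
    · have : α - δ' ≤ l := le_max_left _ _
      linarith
    · linarith
  -- ratio bounds for k ≥ n
  have hq : ∀ k, n ≤ k → l ≤ a (k + 1) / a k ∧ a (k + 1) / a k ≤ u := by
    intro k hk
    have := hN k (le_trans hn hk)
    rw [Real.dist_eq, abs_lt] at this
    constructor
    · exact max_le (by linarith) (div_pos (hpos _) (hpos _)).le
    · linarith
  have hub : ∀ i, a (n + i) ≤ a n * u ^ i := by
    intro i
    induction i with
    | zero => simp
    | succ i ih =>
      have hq' := (hq (n + i) (Nat.le_add_right _ _)).2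
      have heq : a (n + (i + 1)) = a (n + i + 1) / a (n + i) * a (n + i) := by
        rw [div_mul_cancel₀ _ (hpos (n + i)).ne']
        ring_nf
      rw [heq]
      calc a (n + i + 1) / a (n + i) * a (n + i) ≤ u * (a n * u ^ i) :=
            mul_le_mul hq' ih (hpos _).le hu0
        _ = a n * u ^ (i + 1) := by ring
  have hlb : ∀ i, a n * l ^ i ≤ a (n + i) := by
    intro i
    induction i with
    | zero => simp
    | succ i ih =>
      have hq' := (hq (n + i) (Nat.le_add_right _ _)).1
      have heq : a (n + (i + 1)) = a (n + i + 1) / a (n + i) * a (n + i) := by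
        rw [div_mul_cancel₀ _ (hpos (n + i)).ne']
        ring_nf
      rw [heq]
      calc a n * l ^ (i + 1) = l * (a n * l ^ i) := by ring
        _ ≤ a (n + i + 1) / a (n + i) * a (n + i) :=
            mul_le_mul hq' ih (mul_nonneg (hpos n).le (pow_nonneg hl0 i))
              (div_pos (hpos _) (hpos _)).le
  have hs1 : Summable (fun i => a (n + i)) := by
    have := (summable_nat_add_iff n).mpr hsum
    exact this.congr fun i => by rw [add_comm]
  have hsu : Summable (fun i : ℕ => a n * u ^ i) :=
    (summable_geometric_of_lt_one hu0 hu1).mul_left _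
  have hsl : Summable (fun i : ℕ => a n * l ^ i) :=
    (summable_geometric_of_lt_one hl0 hl1).mul_left _
  have hSub : (∑' i, a (n + i)) ≤ a n * (1 - u)⁻¹ := by
    calc (∑' i, a (n + i)) ≤ ∑' i, a n * u ^ i := Summable.tsum_le_tsum hub hs1 hsu
      _ = a n * (1 - u)⁻¹ := by rw [tsum_mul_left, tsum_geometric_of_lt_one hu0 hu1]
  have hSlb : a n * (1 - l)⁻¹ ≤ (∑' i, a (n + i)) := by
    calc a n * (1 - l)⁻¹ = ∑' i, a n * l ^ i := by
          rw [tsum_mul_left, tsum_geometric_of_lt_one hl0 hl1]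
      _ ≤ ∑' i, a (n + i) := Summable.tsum_le_tsum hlb hsl hs1
  have han := hpos n
  have hdu : (∑' i, a (n + i)) / a n ≤ (1 - u)⁻¹ := by
    rw [div_le_iff₀ han]
    linarith [hSub]
  have hdl : (1 - l)⁻¹ ≤ (∑' i, a (n + i)) / a n := by
    rw [le_div_iff₀ han]
    linarith [hSlb]
  have hfu : |(1 - u)⁻¹ - (1 - α)⁻¹| < ε := by
    have := hδf (x := u) (by rw [Real.dist_eq]; simp [hudef]; rw [abs_of_nonneg hδ'pos.le]; exact hδ'δ)
    rwa [Real.dist_eq] at this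
  have hfl : |(1 - l)⁻¹ - (1 - α)⁻¹| < ε := by
    have := hδf (x := l) (by rw [Real.dist_eq]; exact lt_of_le_of_lt hlu hδ'δ)
    rwa [Real.dist_eq] at this
  rw [Real.dist_eq, abs_lt]
  rw [abs_lt] at hfu hfl
  constructor <;> linarith [hfu.1, hfu.2, hfl.1, hfl.2]

theorem tail_sum_ratio_limit (lam : ℕ → ℝ) (hpos : ∀ n, 0 < lam n)
    (hsum : Summable fun n => (lam n)⁻¹)
    (A : ℕ → ℝ) (hA : ∀ n, A n = ∑' i : ℕ, (lam (n + 1 + i))⁻¹)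
    (α : ℝ) (hα : α ∈ Set.Ico (0 : ℝ) 1)
    (hratio : Tendsto (fun n => lam n / lam (n + 1)) atTop (𝓝 α)) :
    Tendsto (fun n => A (n + 1) / A n) atTop (𝓝 α) := by
  obtain ⟨hα0, hα1⟩ := hα
  set a : ℕ → ℝ := fun n => (lam n)⁻¹ with hadef
  have hapos : ∀ n, 0 < a n := fun n => inv_pos.mpr (hpos n)
  have haratio : Tendsto (fun n => a (n + 1) / a n) atTop (𝓝 α) := by
    refine hratio.congr fun n => ?_
    rw [hadef]
    field_simp
  have key := tail_over_term_limit a hapos hsum α hα0 hα1 haratio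
  set S : ℕ → ℝ := fun n => ∑' i, a (n + i) with hSdef
  have hSpos : ∀ n, 0 < S n := by
    intro n
    have hs1 : Summable (fun i => a (n + i)) := by
      have := (summable_nat_add_iff n).mpr hsum
      exact this.congr fun i => by rw [add_comm]
    exact Summable.tsum_pos hs1 (fun i => (hapos _).le) 0 (hapos _)
  have hAS : ∀ n, A n = S (n + 1) := fun n => hA n
  have h1α : (1 : ℝ) - α ≠ 0 := by linarith
  have T1 : Tendsto (fun n => S (n + 2) / a (n + 2)) atTop (𝓝 (1 - α)⁻¹) :=
    key.comp (tendsto_add_atTop_nat 2)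
  have T2 : Tendsto (fun n => a (n + 2) / a (n + 1)) atTop (𝓝 α) :=
    haratio.comp (tendsto_add_atTop_nat 1)
  have T3 : Tendsto (fun n => a (n + 1) / S (n + 1)) atTop (𝓝 (1 - α)) := by
    have := (key.comp (tendsto_add_atTop_nat 1)).inv₀ (inv_ne_zero h1α)
    rw [inv_inv] at this
    refine this.congr fun n => ?_
    simp [inv_div]; rfl
  have := (T1.mul T2).mul T3
  have hval : (1 - α)⁻¹ * α * (1 - α) = α := by field_simp
  rw [hval] at this
  refine this.congr fun n => ?_
  rw [hAS, hAS]
  have haux : ∀ x y z w : ℝ, y ≠ 0 → z ≠ 0 → x / y * (y / z) * (z / w) = x / w := by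
    intro x y z w hy hz
    calc x / y * (y / z) * (z / w) = x * (y / y) * (z / z) / w := by ring
      _ = x / w := by rw [div_self hy, div_self hz]; ring
  have hn1 : n + 1 + 1 = n + 2 := rfl
  rw [hn1]
  exact haux _ _ _ _ (hapos (n + 2)).ne' (hapos (n + 1)).ne'
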